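/- arXiv:1305.2749 — 2 statements merged into one kernel-verified Lean document; each statement's English description precedes it below -/
import Mathlib

section
/- If a nonzero homogeneous polynomial I of degree m in the coefficients of a general degree-d form in n+1 variables is invariant under the action of SL(n+1), then n+1 divides m·d. -/
open MvPolynomial

lemma eval_mul_of_isHomogeneous' {σ : Type*} {p : MvPolynomial σ ℂ} {m : ℕ}
    (hp : p.IsHomogeneous m) (c : ℂ) (v : σ → ℂ) :
    eval (fun i => c * v i) p = c ^ m * eval v p := by
  rw [eval_eq, eval_eq, Finset.mul_sum]
  refine Finset.sum_congr rfl fun s hs => ?_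
  have hsum : ∑ i ∈ s.support, s i = m := by
    have := hp (Finsupp.mem_support_iff.mp hs)
    rw [← this, Finsupp.weight_apply]
    simp [Finsupp.sum]
  rw [← hsum]
  simp_rw [mul_pow, Finset.prod_mul_distrib, Finset.prod_pow_eq_pow_sum]
  ring

lemma eval_congr_vars' {σ : Type*} {p : MvPolynomial σ ℂ} {f g : σ → ℂ}
    (h : ∀ i ∈ p.vars, f i = g i) : eval f p = eval g p := by
  rw [eval_eq, eval_eq]
  refine Finset.sum_congr rfl fun s hs => ?_
  congr 1
  refine Finset.prod_congr rfl fun i hi => ?_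
  rw [h i ((mem_vars i).mpr ⟨s, hs, hi⟩)]

/-- If a nonzero polynomial `I`, homogeneous of degree `m` in the coefficients of a
degree-`d` form in `n+1` variables, is invariant under the `SL(n+1)` action by change
of variables, then `n+1` divides `m * d`. -/
theorem sl_invariant_implies_dvd (n d m : ℕ)
    (I : MvPolynomial {s : Fin (n + 1) →₀ ℕ // (s.sum fun _ e => e) = d} ℂ)
    (hI : I ≠ 0) (hhom : I.IsHomogeneous m)
    (hinv : ∀ g : Matrix.SpecialLinearGroup (Fin (n + 1)) ℂ,
      ∀ F : MvPolynomial (Fin (n + 1)) ℂ,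
        eval (fun s => coeff s.1 ((aeval fun i => ∑ j, C (g.1 i j) * X j) F)) I =
          eval (fun s => coeff s.1 F) I) :
    (n + 1) ∣ m * d := by
  -- primitive (n+1)-st root of unity
  obtain ⟨ζ, hζ⟩ : ∃ z : ℂ, IsPrimitiveRoot z (n + 1) :=
    ⟨_, Complex.isPrimitiveRoot_exp _ (Nat.succ_ne_zero n)⟩
  have hζpow : ζ ^ (n + 1) = 1 := hζ.pow_eq_one
  -- the scalar matrix as an element of SL(n+1)
  have hdet : (ζ • (1 : Matrix (Fin (n + 1)) (Fin (n + 1)) ℂ)).det = 1 := by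
    rw [Matrix.det_smul, Matrix.det_one]
    simp [hζpow]
  set g : Matrix.SpecialLinearGroup (Fin (n + 1)) ℂ := ⟨ζ • 1, hdet⟩ with hg
  -- a point where I does not vanish
  have hex : ∃ v : {s : Fin (n + 1) →₀ ℕ // (s.sum fun _ e => e) = d} → ℂ, eval v I ≠ 0 := by
    by_contra h
    push_neg at h
    exact hI (MvPolynomial.funext fun x => by rw [h x, map_zero])
  obtain ⟨v, hv⟩ := hex
  set w : {s : Fin (n + 1) →₀ ℕ // (s.sum fun _ e => e) = d} → ℂ :=
    fun s => if s ∈ I.vars then v s else 0 with hw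
  have hwv : eval w I = eval v I := eval_congr_vars' fun i hi => by simp [hw, hi]
  -- the polynomial F with coefficients w
  set F : MvPolynomial (Fin (n + 1)) ℂ := ∑ s ∈ I.vars, monomial s.1 (v s) with hF
  have hcF : ∀ t : {s : Fin (n + 1) →₀ ℕ // (s.sum fun _ e => e) = d},
      coeff t.1 F = w t := by
    intro t
    rw [hF, hw]
    rw [coeff_sum]
    simp only [coeff_monomial, Subtype.val_inj]
    exact Finset.sum_ite_eq' I.vars t v
  -- the substitution sends X i to ζ • X i
  have hsub : (fun i => ∑ j, C (g.1 i j) * X j : Fin (n + 1) → MvPolynomial (Fin (n + 1)) ℂ) =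
      fun i => C ζ * X i := by
    funext i
    rw [hg]
    simp only [Matrix.smul_apply, Matrix.one_apply, smul_eq_mul, mul_ite, mul_one, mul_zero,
      apply_ite C, map_zero, ite_mul, zero_mul]
    simp
  -- the transformed F
  have hAF : (aeval fun i => ∑ j, C (g.1 i j) * X j) F =
      ∑ s ∈ I.vars, monomial s.1 (ζ ^ d * v s) := by
    rw [hsub, hF, map_sum]
    refine Finset.sum_congr rfl fun s _ => ?_
    rw [aeval_monomial]
    have hsd : ∑ i ∈ s.1.support, s.1 i = d := by
      have := s.2; rwa [Finsupp.sum] at this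
    rw [Finsupp.prod]
    simp_rw [mul_pow]
    rw [Finset.prod_mul_distrib, Finset.prod_pow_eq_pow_sum, hsd, ← C_pow,
      monomial_eq, Finsupp.prod]
    simp only [algebraMap_eq]
    rw [C_mul]
    ring
  have hcAF : ∀ t : {s : Fin (n + 1) →₀ ℕ // (s.sum fun _ e => e) = d},
      coeff t.1 ((aeval fun i => ∑ j, C (g.1 i j) * X j) F) = ζ ^ d * w t := by
    intro t
    rw [hAF, coeff_sum]
    simp only [coeff_monomial, Subtype.val_inj, hw, mul_ite, mul_zero]
    exact Finset.sum_ite_eq' I.vars t fun s => ζ ^ d * v s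
  -- apply invariance
  have key := hinv g F
  simp only [hcAF, hcF] at key
  rw [eval_mul_of_isHomogeneous' hhom (ζ ^ d) w, hwv] at key
  have h2 : ((ζ ^ d) ^ m - 1) * eval v I = 0 := by
    rw [sub_mul, one_mul, key, sub_self]
  have h1 : (ζ ^ d) ^ m = 1 := by
    rcases mul_eq_zero.mp h2 with h | h
    · exact sub_eq_zero.mp h
    · exact absurd h hv
  rw [← pow_mul, hζ.pow_eq_one_iff_dvd] at h1
  rw [mul_comm]
  exact h1
end

section
/- Hilbert's finiteness theorem: if G is a reductive group acting linearly on a finite-dimensional complex vector space W (so that a Reynolds operator exists, i.e. a G-equivariant projection R : ℂ[W] → ℂ[W]^G that is the identity on ℂ[W]^G and satisfies the Reynolds identity R(fg) = f R(g) for f invariant), then the invariant ring ℂ[W]^G is a finitely generated ℂ-algebra. -/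
open MvPolynomial

/-- The subalgebra of `G`-invariant polynomials. -/
noncomputable def invariantSubalgebra (n : ℕ) {G : Type*} [Group G]
    (φ : G →* MvPolynomial (Fin n) ℂ ≃ₐ[ℂ] MvPolynomial (Fin n) ℂ) :
    Subalgebra ℂ (MvPolynomial (Fin n) ℂ) where
  carrier := {x | ∀ g : G, φ g x = x}
  mul_mem' := fun hx hy g => by simp [map_mul, hx g, hy g]
  add_mem' := fun hx hy g => by simp [map_add, hx g, hy g]
  algebraMap_mem' := fun c g => (φ g).commutes c

/-- A span of a set in a Noetherian module is the span of a finite subset. -/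
lemma exists_finset_span_eq {R M : Type*} [CommRing R] [AddCommGroup M] [Module R M]
    [IsNoetherian R M] (S : Set M) :
    ∃ T : Finset M, ↑T ⊆ S ∧ Submodule.span R (↑T : Set M) = Submodule.span R S := by
  classical
  obtain ⟨G, hG⟩ := (IsNoetherian.noetherian (Submodule.span R S))
  have hmem : ∀ g ∈ G, ∃ Tg : Finset M, ↑Tg ⊆ S ∧ g ∈ Submodule.span R (↑Tg : Set M) := by
    intro g hg
    exact Submodule.mem_span_finite_of_mem_span (hG ▸ Submodule.subset_span hg)
  choose! t ht1 ht2 using hmem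
  refine ⟨G.biUnion t, ?_, le_antisymm ?_ ?_⟩
  · intro x hx
    obtain ⟨g, hg, hx⟩ := Finset.mem_biUnion.1 hx
    exact ht1 g hg hx
  · exact Submodule.span_le.2 fun x hx => by
      obtain ⟨g, hg, hx⟩ := Finset.mem_biUnion.1 hx
      exact Submodule.subset_span (ht1 g hg hx)
  · rw [← hG]
    refine Submodule.span_le.2 fun g hg => ?_
    exact Submodule.span_mono (by
      intro x hx
      exact Finset.mem_coe.2 (Finset.mem_biUnion.2 ⟨g, hg, hx⟩)) (ht2 g hg)

/-- Hilbert's finiteness theorem: given a linear, degree-preserving action of a group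
`G` on the polynomial ring `ℂ[W]`, together with a Reynolds operator `R` (a projection
onto the invariants satisfying the Reynolds identity), the invariant ring `ℂ[W]^G` is
a finitely generated `ℂ`-algebra. -/
theorem hilbert_finiteness (n : ℕ) {G : Type*} [Group G]
    (φ : G →* MvPolynomial (Fin n) ℂ ≃ₐ[ℂ] MvPolynomial (Fin n) ℂ)
    (hgraded : ∀ g : G, ∀ i : ℕ, ∀ p ∈ homogeneousSubmodule (Fin n) ℂ i,
      φ g p ∈ homogeneousSubmodule (Fin n) ℂ i)
    (R : MvPolynomial (Fin n) ℂ →ₗ[ℂ] MvPolynomial (Fin n) ℂ)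
    (hRrange : ∀ p, ∀ g : G, φ g (R p) = R p)
    (hRid : ∀ p, (∀ g : G, φ g p = p) → R p = p)
    (hReynolds : ∀ p q, (∀ g : G, φ g p = p) → R (p * q) = p * R q) :
    Algebra.FiniteType ℂ (invariantSubalgebra n φ) := by
  classical
  -- the action commutes with taking homogeneous components
  have hcomm : ∀ (g : G) (i : ℕ) (q : MvPolynomial (Fin n) ℂ),
      homogeneousComponent i (φ g q) = φ g (homogeneousComponent i q) := by
    intro g i q
    conv_lhs => rw [← sum_homogeneousComponent q]
    rw [map_sum, map_sum]
    have : ∀ j ∈ Finset.range (q.totalDegree + 1),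
        homogeneousComponent i (φ g (homogeneousComponent j q)) =
          if i = j then φ g (homogeneousComponent j q) else 0 := by
      intro j _
      exact homogeneousComponent_of_mem
        (hgraded g j _ ((mem_homogeneousSubmodule _ _).2 (homogeneousComponent_isHomogeneous j q)))
    rw [Finset.sum_congr rfl this, Finset.sum_ite_eq (Finset.range (q.totalDegree + 1)) i
      (fun j => φ g (homogeneousComponent j q))]
    by_cases hi : i ∈ Finset.range (q.totalDegree + 1)
    · rw [if_pos hi]
    · rw [if_neg hi, homogeneousComponent_eq_zero i q (by
        simpa using Finset.mem_range.not.1 hi), map_zero]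
  have hcompinv : ∀ (q : MvPolynomial (Fin n) ℂ), (∀ g : G, φ g q = q) →
      ∀ (i : ℕ) (g : G), φ g (homogeneousComponent i q) = homogeneousComponent i q := by
    intro q hq i g
    rw [← hcomm, hq]
  -- the set of positive-degree homogeneous invariants
  set S : Set (MvPolynomial (Fin n) ℂ) :=
    {p | (∀ g : G, φ g p = p) ∧ ∃ i, 0 < i ∧ p ∈ homogeneousSubmodule (Fin n) ℂ i} with hS
  obtain ⟨T, hTS, hTspan⟩ := exists_finset_span_eq (R := MvPolynomial (Fin n) ℂ) S
  have hTinv : ∀ f ∈ T, ∀ g : G, φ g f = f := fun f hf => (hTS hf).1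
  -- main claim: every homogeneous invariant lies in the adjoin of T
  have main : ∀ d : ℕ, ∀ p ∈ homogeneousSubmodule (Fin n) ℂ d, (∀ g : G, φ g p = p) →
      p ∈ Algebra.adjoin ℂ (↑T : Set (MvPolynomial (Fin n) ℂ)) := by
    intro d
    induction d using Nat.strong_induction_on with
    | _ d ih =>
      intro p hp hpinv
      rcases Nat.eq_zero_or_pos d with rfl | hd
      · have h0 : p = C (coeff 0 p) := by
          have := homogeneousComponent_of_mem hp (m := 0)
          rw [if_pos rfl, homogeneousComponent_zero] at this
          exact this.symm
        rw [h0]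
        exact Subalgebra.algebraMap_mem _ _
      · have hpS : p ∈ Submodule.span (MvPolynomial (Fin n) ℂ) (↑T : Set (MvPolynomial (Fin n) ℂ)) := by
          rw [hTspan]
          exact Submodule.subset_span ⟨hpinv, d, hd, hp⟩
        obtain ⟨c, -, hc⟩ := Submodule.mem_span_finset.1 hpS
        have h2 : p = ∑ f ∈ T, f * R (c f) := by
          have := hRid p hpinv
          calc p = R p := this.symm
            _ = R (∑ f ∈ T, c f • f) := by rw [hc]
            _ = ∑ f ∈ T, R (c f • f) := map_sum R _ _
            _ = ∑ f ∈ T, f * R (c f) := by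
                refine Finset.sum_congr rfl fun f hf => ?_
                rw [smul_eq_mul, mul_comm, hReynolds f (c f) (hTinv f hf)]
        -- take degree-d component
        have h3 : p = ∑ f ∈ T, homogeneousComponent d (f * R (c f)) := by
          have := homogeneousComponent_of_mem hp (m := d)
          rw [if_pos rfl] at this
          conv_lhs => rw [← this, h2]
          rw [map_sum]
        rw [h3]
        refine Subalgebra.sum_mem _ fun f hf => ?_
        obtain ⟨e, he, hfe⟩ := (hTS hf).2
        -- decompose R (c f) into homogeneous components
        have hdec : f * R (c f) =
            ∑ j ∈ Finset.range ((R (c f)).totalDegree + 1),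
              f * homogeneousComponent j (R (c f)) := by
          rw [← Finset.mul_sum, sum_homogeneousComponent]
        rw [hdec, map_sum]
        refine Subalgebra.sum_mem _ fun j _ => ?_
        have hprod : f * homogeneousComponent j (R (c f)) ∈
            homogeneousSubmodule (Fin n) ℂ (e + j) := by
          exact (mem_homogeneousSubmodule _ _).2
            (((mem_homogeneousSubmodule _ _).1 hfe).mul
              (homogeneousComponent_isHomogeneous j (R (c f))))
        rw [homogeneousComponent_of_mem hprod]
        by_cases hde : d = e + j
        · rw [if_pos hde]
          refine Subalgebra.mul_mem _ (Algebra.subset_adjoin hf) ?_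
          have hj : j < d := by omega
          exact ih j hj _ ((mem_homogeneousSubmodule _ _).2
            (homogeneousComponent_isHomogeneous j (R (c f))))
            (hcompinv (R (c f)) (hRrange (c f)) j)
        · rw [if_neg hde]
          exact Subalgebra.zero_mem _
  -- conclude
  have hadj : Algebra.adjoin ℂ (↑T : Set (MvPolynomial (Fin n) ℂ)) = invariantSubalgebra n φ := by
    apply le_antisymm
    · rw [Algebra.adjoin_le_iff]
      intro f hf
      exact hTinv f hf
    · intro p hp
      have hp' : ∀ g : G, φ g p = p := hp
      have : p = ∑ i ∈ Finset.range (p.totalDegree + 1), homogeneousComponent i p :=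
        (sum_homogeneousComponent p).symm
      rw [this]
      exact Subalgebra.sum_mem _ fun i _ => main i _
        ((mem_homogeneousSubmodule _ _).2 (homogeneousComponent_isHomogeneous i p))
        (hcompinv p hp' i)
  have hfg : (invariantSubalgebra n φ).FG := ⟨T, hadj⟩
  exact (Subalgebra.fg_iff_finiteType _).1 hfg
end
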